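/- arXiv:0904.3742 — 4 statements merged into one kernel-verified Lean document; each statement's English description precedes it below -/
import Mathlib

section
/- Let t ∈ (0, π/2) with t ≠ π/4, and let s satisfy 3 cos(s-t) = (cos 2t) cos(s+t) with cos(s+t) < 0. Then λ_∞ := -(3/8) tan(s+t) equals (1/4) cot 2t. -/
open Real

theorem stmt_9 (t s : ℝ) (ht : t ∈ Set.Ioo 0 (Real.pi / 2)) (ht4 : t ≠ Real.pi / 4)
    (hc : Real.cos (s + t) < 0)
    (h : 3 * Real.cos (s - t) = Real.cos (2 * t) * Real.cos (s + t)) :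
    -(3 / 8) * Real.tan (s + t) = (1 / 4) * (Real.cos (2 * t) / Real.sin (2 * t)) := by
  have h1 : s - t = (s + t) - 2 * t := by ring
  rw [h1, Real.cos_sub] at h
  have hs : Real.sin (2 * t) > 0 :=
    Real.sin_pos_of_pos_of_lt_pi (by linarith [ht.1]) (by linarith [ht.2])
  have hcne : Real.cos (s + t) ≠ 0 := ne_of_lt hc
  rw [Real.tan_eq_sin_div_cos]
  field_simp
  rw [mul_comm t 2, eq_div_iff hs.ne']
  nlinarith [h, hs, hc]
end

section
/- For t ∈ (0, π/2), the Schwarzian derivative S(z) = (g'/g)' - (1/2)(g'/g)², where g = f_∞′(z) = (1 - 2(cos 2t)z² + z⁴)^{-1/2}, equals 2(cos 2t + (cos² 2t - 3)z² + (cos 2t)z⁴)/(1 - 2(cos 2t)z² + z⁴)² on the interval where 1 - 2(cos 2t)z² + z⁴ > 0. -/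
open Real

lemma ratio_eq (c : ℝ) (u : ℝ) (hu : 0 < 1 - 2 * c * u ^ 2 + u ^ 4) :
    deriv (fun v : ℝ => (1 - 2 * c * v ^ 2 + v ^ 4) ^ (-(1 : ℝ) / 2)) u /
      (1 - 2 * c * u ^ 2 + u ^ 4) ^ (-(1 : ℝ) / 2)
    = -2 * (u ^ 3 - c * u) / (1 - 2 * c * u ^ 2 + u ^ 4) := by
  set Q : ℝ := 1 - 2 * c * u ^ 2 + u ^ 4 with hQ
  have hQ' : HasDerivAt (fun v : ℝ => 1 - 2 * c * v ^ 2 + v ^ 4)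
      (4 * u ^ 3 - 4 * c * u) u := by
    have h1 : HasDerivAt (fun v : ℝ => 1 - 2 * c * v ^ 2 + v ^ 4)
        (0 - 2 * c * (2 * u ^ 1) + 4 * u ^ 3) u := by
      exact (((hasDerivAt_const u (1:ℝ)).sub
        ((hasDerivAt_pow 2 u).const_mul (2*c))).add (hasDerivAt_pow 4 u))
    convert h1 using 1; ring
  have hne : Q ≠ 0 := ne_of_gt hu
  have hd : HasDerivAt (fun v : ℝ => (1 - 2 * c * v ^ 2 + v ^ 4) ^ (-(1 : ℝ) / 2))
      ((-(1:ℝ)/2) * Q ^ ((-(1:ℝ)/2) - 1) * (4 * u ^ 3 - 4 * c * u)) u := by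
    have := hQ'.rpow_const (p := -(1:ℝ)/2) (Or.inl hne)
    convert this using 1; ring
  rw [hd.deriv]
  have hpow : Q ^ ((-(1:ℝ)/2) - 1) / Q ^ (-(1:ℝ)/2) = Q⁻¹ := by
    rw [← Real.rpow_sub hu]
    norm_num
    exact Real.rpow_neg_one Q
  have hre : (-(1:ℝ)/2 * Q ^ ((-(1:ℝ)/2) - 1) * (4 * u ^ 3 - 4 * c * u)) / Q ^ (-(1:ℝ)/2)
      = (-2 * (u ^ 3 - c * u)) * (Q ^ ((-(1:ℝ)/2) - 1) / Q ^ (-(1:ℝ)/2)) := by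
    ring
  rw [hre, hpow, ← div_eq_mul_inv]

theorem stmt_11 (t : ℝ) (ht : t ∈ Set.Ioo 0 (Real.pi / 2)) (z : ℝ)
    (hq : 0 < 1 - 2 * Real.cos (2 * t) * z ^ 2 + z ^ 4) :
    deriv (fun w : ℝ =>
        deriv (fun u : ℝ => (1 - 2 * Real.cos (2 * t) * u ^ 2 + u ^ 4) ^ (-(1 : ℝ) / 2)) w /
          (1 - 2 * Real.cos (2 * t) * w ^ 2 + w ^ 4) ^ (-(1 : ℝ) / 2)) z -
      (1 / 2) * (deriv (fun u : ℝ => (1 - 2 * Real.cos (2 * t) * u ^ 2 + u ^ 4) ^ (-(1 : ℝ) / 2)) z /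
          (1 - 2 * Real.cos (2 * t) * z ^ 2 + z ^ 4) ^ (-(1 : ℝ) / 2)) ^ 2 =
    2 * (Real.cos (2 * t) + (Real.cos (2 * t) ^ 2 - 3) * z ^ 2 + Real.cos (2 * t) * z ^ 4) /
      (1 - 2 * Real.cos (2 * t) * z ^ 2 + z ^ 4) ^ 2 := by
  set c : ℝ := Real.cos (2 * t) with hc
  -- the set where Q > 0 is open
  have hopen : IsOpen {u : ℝ | 0 < 1 - 2 * c * u ^ 2 + u ^ 4} := by
    have hcont : Continuous fun u : ℝ => 1 - 2 * c * u ^ 2 + u ^ 4 := by continuity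
    exact isOpen_lt continuous_const hcont
  have hmem : z ∈ {u : ℝ | 0 < 1 - 2 * c * u ^ 2 + u ^ 4} := hq
  have hev : ∀ᶠ u in nhds z, 0 < 1 - 2 * c * u ^ 2 + u ^ 4 :=
    hopen.mem_nhds hmem
  have heq : (fun w : ℝ =>
      deriv (fun u : ℝ => (1 - 2 * c * u ^ 2 + u ^ 4) ^ (-(1 : ℝ) / 2)) w /
        (1 - 2 * c * w ^ 2 + w ^ 4) ^ (-(1 : ℝ) / 2)) =ᶠ[nhds z]
      (fun w : ℝ => -2 * (w ^ 3 - c * w) / (1 - 2 * c * w ^ 2 + w ^ 4)) := by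
    filter_upwards [hev] with u hu
    exact ratio_eq c u hu
  rw [heq.deriv_eq, ratio_eq c z hq]
  have hQ' : HasDerivAt (fun v : ℝ => 1 - 2 * c * v ^ 2 + v ^ 4)
      (4 * z ^ 3 - 4 * c * z) z := by
    have h1 : HasDerivAt (fun v : ℝ => 1 - 2 * c * v ^ 2 + v ^ 4)
        (0 - 2 * c * (2 * z ^ 1) + 4 * z ^ 3) z :=
      (((hasDerivAt_const z (1:ℝ)).sub
        ((hasDerivAt_pow 2 z).const_mul (2*c))).add (hasDerivAt_pow 4 z))
    convert h1 using 1; ring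
  have hN : HasDerivAt (fun v : ℝ => -2 * (v ^ 3 - c * v))
      (-2 * (3 * z ^ 2 - c)) z := by
    have h1 : HasDerivAt (fun v : ℝ => -2 * (v ^ 3 - c * v))
        (-2 * (3 * z ^ 2 - c * 1)) z :=
      ((hasDerivAt_pow 3 z).sub ((hasDerivAt_id z).const_mul c)).const_mul (-2)
    convert h1 using 1; ring
  have hne : (1 - 2 * c * z ^ 2 + z ^ 4) ≠ 0 := ne_of_gt hq
  have hdiv : HasDerivAt (fun w : ℝ => -2 * (w ^ 3 - c * w) / (1 - 2 * c * w ^ 2 + w ^ 4))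
      ((-2 * (3 * z ^ 2 - c) * (1 - 2 * c * z ^ 2 + z ^ 4) -
        -2 * (z ^ 3 - c * z) * (4 * z ^ 3 - 4 * c * z)) /
        (1 - 2 * c * z ^ 2 + z ^ 4) ^ 2) z := hN.div hQ' hne
  rw [hdiv.deriv]
  field_simp
  ring
end

section
/- For t ∈ (0, π/2) and λ ∈ ℝ, with a = e^{it}, ψ₀(z) = (3/2)(a²/(z²-a²)² + ā²/(z²-ā²)²), ψ₁(z) = -i(1/(z²-a²) - 1/(z²-ā²)), and R_{t,λ} = 2ψ₀ - 2λψ₁, one has R_{π/2 - t, -λ}(iz) = -R_{t,λ}(z) for all z ∈ ℂ with z² ≠ ±a², ±ā² as appropriate. -/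
open Real Complex

noncomputable def Rparam (a : ℂ) (μ : ℝ) (w : ℂ) : ℂ :=
  2 * ((3 / 2) * (a ^ 2 / (w ^ 2 - a ^ 2) ^ 2 +
      ((starRingEnd ℂ) a) ^ 2 / (w ^ 2 - ((starRingEnd ℂ) a) ^ 2) ^ 2)) -
  2 * (μ : ℂ) * (-Complex.I * (1 / (w ^ 2 - a ^ 2) -
      1 / (w ^ 2 - ((starRingEnd ℂ) a) ^ 2)))

private theorem key15 (t : ℝ) : Complex.exp (Complex.I * (Real.pi / 2 - t)) =
    Complex.I * (starRingEnd ℂ) (Complex.exp (Complex.I * t)) := by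
  rw [← Complex.exp_conj]
  have h : (starRingEnd ℂ) (Complex.I * t) = -(Complex.I * t) := by
    simp [Complex.conj_I]
  rw [h, show Complex.I * ((Real.pi:ℂ) / 2 - t) = Complex.I * (Real.pi/2) + -(Complex.I * t) by
      push_cast; ring,
    Complex.exp_add, show Complex.I * ((Real.pi:ℂ)/2) = (Real.pi/2 : ℂ) * Complex.I by ring,
    Complex.exp_mul_I, Complex.cos_pi_div_two, Complex.sin_pi_div_two]
  ring

private theorem alg15 (A B μ x y : ℂ) (hx : x ≠ 0) (hy : y ≠ 0) :
    2 * ((3/2 : ℂ) * ((-(B^2))/(-y)^2 + (-(A^2))/(-x)^2)) -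
      2 * (-μ) * (-Complex.I * (1/(-y) - 1/(-x))) =
    -(2 * ((3/2 : ℂ) * (A^2/x^2 + B^2/y^2)) - 2 * μ * (-Complex.I * (1/x - 1/y))) := by
  simp only [neg_sq, div_neg, one_div, ← neg_add', neg_sub_neg]
  field_simp
  ring

theorem stmt_15 (t lam : ℝ) (ht : t ∈ Set.Ioo 0 (Real.pi / 2)) (z : ℂ)
    (h1 : z ^ 2 ≠ (Complex.exp (Complex.I * t)) ^ 2)
    (h2 : z ^ 2 ≠ ((starRingEnd ℂ) (Complex.exp (Complex.I * t))) ^ 2)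
    (h3 : (Complex.I * z) ^ 2 ≠ (Complex.exp (Complex.I * (Real.pi / 2 - t))) ^ 2)
    (h4 : (Complex.I * z) ^ 2 ≠ ((starRingEnd ℂ) (Complex.exp (Complex.I * (Real.pi / 2 - t)))) ^ 2) :
    Rparam (Complex.exp (Complex.I * (Real.pi / 2 - t))) (-lam) (Complex.I * z) =
      -Rparam (Complex.exp (Complex.I * t)) lam z := by
  set a := Complex.exp (Complex.I * t) with ha
  set b := (starRingEnd ℂ) a with hb
  rw [key15 t]
  rw [← ha, ← hb]
  have d1 : z ^ 2 - a ^ 2 ≠ 0 := sub_ne_zero.mpr h1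
  have d2 : z ^ 2 - b ^ 2 ≠ 0 := sub_ne_zero.mpr h2
  have q1 : (Complex.I * b) ^ 2 = -(b ^ 2) := by
    rw [mul_pow, Complex.I_sq]; ring
  have q2 : ((starRingEnd ℂ) (Complex.I * b)) ^ 2 = -(a ^ 2) := by
    rw [map_mul, Complex.conj_I, hb, Complex.conj_conj, mul_pow]
    rw [neg_pow, Complex.I_sq]; ring
  have q3 : (Complex.I * z) ^ 2 = -(z ^ 2) := by
    rw [mul_pow, Complex.I_sq]; ring
  simp only [Rparam, q1, q2, q3]
  push_cast
  rw [show -(z^2) - -(b^2) = -(z^2 - b^2) by ring,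
      show -(z^2) - -(a^2) = -(z^2 - a^2) by ring]
  exact alg15 a b lam (z^2 - a^2) (z^2 - b^2) d1 d2
end

section
/- Let t ∈ (0, π/2), y_∞(z) = (1 - 2(cos 2t)z² + z⁴)^{1/4}, ψ₁(z) = 2 sin 2t/(z⁴ - 2(cos 2t)z² + 1), and let X̃ₙ be the iterated integrals determined by the pair (ψ₁ y_∞², 1/y_∞²) (i.e., X̃₁ ≡ 1, X̃ₙ(z) = ∫₀^z X̃_{n-1} qₙ₋₁ with q₁ = ψ₁y_∞², q₂ = 1/y_∞², alternating). Then the coefficients aₙ = -2 Σ_{k=0}^{n} X̃_{2k}(1) X̃_{2(n-k)-1}(1) satisfy a₀ = 0 and aₙ ≤ 0 for all n ≥ 1 (with the convention X̃₀ ≡ 1, X̃₋₁ ≡ 0). -/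
open Real intervalIntegral

theorem stmt_16 (t : ℝ) (ht : t ∈ Set.Ioo 0 (Real.pi / 2))
    (X : ℤ → ℝ → ℝ)
    (hXm : ∀ z : ℝ, X (-1) z = 0)
    (hX0 : ∀ z : ℝ, X 0 z = 1)
    (hX1 : ∀ z : ℝ, X 1 z = 1)
    (hrec : ∀ n : ℤ, 2 ≤ n → ∀ z : ℝ,
      X n z = ∫ ζ in (0 : ℝ)..z,
        X (n - 1) ζ *
          (if (n - 1) % 2 = 1 then
            (2 * Real.sin (2 * t) / (ζ ^ 4 - 2 * Real.cos (2 * t) * ζ ^ 2 + 1)) *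
              ((1 - 2 * Real.cos (2 * t) * ζ ^ 2 + ζ ^ 4) ^ ((1 : ℝ) / 4)) ^ 2
          else
            1 / ((1 - 2 * Real.cos (2 * t) * ζ ^ 2 + ζ ^ 4) ^ ((1 : ℝ) / 4)) ^ 2)) :
    (-2 * ∑ k ∈ Finset.range 1, X (2 * (k : ℤ)) 1 * X (2 * ((0 : ℤ) - k) - 1) 1 = 0) ∧
    ∀ n : ℕ, 1 ≤ n →
      -2 * ∑ k ∈ Finset.range (n + 1), X (2 * (k : ℤ)) 1 * X (2 * ((n : ℤ) - k) - 1) 1 ≤ 0 := by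
  obtain ⟨ht0, ht1⟩ := ht
  have hsin : 0 ≤ Real.sin (2 * t) :=
    Real.sin_nonneg_of_nonneg_of_le_pi (by linarith) (by linarith)
  have hq : ∀ (n : ℤ) (ζ : ℝ), 0 ≤
      (if (n - 1) % 2 = 1 then
        (2 * Real.sin (2 * t) / (ζ ^ 4 - 2 * Real.cos (2 * t) * ζ ^ 2 + 1)) *
          ((1 - 2 * Real.cos (2 * t) * ζ ^ 2 + ζ ^ 4) ^ ((1 : ℝ) / 4)) ^ 2
      else
        1 / ((1 - 2 * Real.cos (2 * t) * ζ ^ 2 + ζ ^ 4) ^ ((1 : ℝ) / 4)) ^ 2) := by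
    intro n ζ
    split
    · refine mul_nonneg (div_nonneg (by linarith) ?_) (by positivity)
      nlinarith [sq_nonneg (ζ ^ 2 - Real.cos (2 * t)), Real.cos_sq_le_one (2 * t)]
    · positivity
  have key : ∀ n : ℤ, -1 ≤ n → ∀ z : ℝ, 0 ≤ z → 0 ≤ X n z := by
    refine Int.le_induction ?_ ?_
    · intro z _; rw [hXm]
    · intro n hn ih z hz
      rcases lt_or_ge n 1 with h | h
      · interval_cases n
        · norm_num [hX0]
        · norm_num [hX1]
      · rw [hrec (n + 1) (by omega)]
        refine intervalIntegral.integral_nonneg hz fun ζ hζ => ?_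
        refine mul_nonneg ?_ (hq (n + 1) ζ)
        have hn1 : n + 1 - 1 = n := by ring
        rw [hn1]
        exact ih ζ hζ.1
  constructor
  · norm_num [hXm]
  · intro n hn
    have hS : 0 ≤ ∑ k ∈ Finset.range (n + 1),
        X (2 * (k : ℤ)) 1 * X (2 * ((n : ℤ) - k) - 1) 1 := by
      refine Finset.sum_nonneg fun k hk => ?_
      have hk' : (k : ℤ) ≤ n := by
        exact_mod_cast Nat.lt_succ_iff.mp (Finset.mem_range.mp hk)
      exact mul_nonneg (key (2 * k) (by omega) 1 zero_le_one)
        (key (2 * ((n : ℤ) - k) - 1) (by omega) 1 zero_le_one)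
    linarith
end
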